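/- Let M = (S, A, P, R, γ) be a finite discounted MDP with rewards in [0,1], let Q : S×A → ℝ be any function, and let π_Q be a deterministic policy with π_Q(s) ∈ argmax_a Q(s,a). Then ‖V_M^* − V_M^{π_Q}‖_∞ ≤ 2‖Q_M^* − Q‖_∞/(1−γ). -/
import Mathlib


open scoped BigOperators Classical

namespace MDPGroup

variable {S A G : Type*}

/-- `P` is a transition kernel: `P s a ·` is a probability distribution on states. -/
structure IsKernel [Fintype S] (P : S → A → S → ℝ) : Prop where
  nonneg : ∀ s a s', 0 ≤ P s a s'
  sum_one : ∀ s a, ∑ s', P s a s' = 1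

/-- `π` is a stationary randomized policy. -/
structure IsPolicy [Fintype A] (π : S → A → ℝ) : Prop where
  nonneg : ∀ s a, 0 ≤ π s a
  sum_one : ∀ s, ∑ a, π s a = 1

/-- `Q` satisfies the Bellman equation for policy `π`. -/
def IsBellman [Fintype S] [Fintype A] (P : S → A → S → ℝ) (R : S → A → ℝ) (γ : ℝ)
    (π : S → A → ℝ) (Q : S → A → ℝ) : Prop :=
  ∀ s a, Q s a = R s a + γ * ∑ s', P s a s' * ∑ a', π s' a' * Q s' a'

/-- The action-value function of policy `π` (the unique solution of the Bellman equation,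
when it exists). -/
noncomputable def Qpi [Fintype S] [Fintype A] (P : S → A → S → ℝ) (R : S → A → ℝ)
    (γ : ℝ) (π : S → A → ℝ) : S → A → ℝ :=
  if h : ∃ Q : S → A → ℝ, IsBellman P R γ π Q then h.choose else 0

/-- The state-value function of policy `π`. -/
noncomputable def Vpi [Fintype S] [Fintype A] (P : S → A → S → ℝ) (R : S → A → ℝ)
    (γ : ℝ) (π : S → A → ℝ) : S → ℝ :=
  fun s => ∑ a, π s a * Qpi P R γ π s a

/-- The optimal state-value function. -/
noncomputable def Vstar [Fintype S] [Fintype A] (P : S → A → S → ℝ) (R : S → A → ℝ)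
    (γ : ℝ) : S → ℝ :=
  fun s => ⨆ π : {π : S → A → ℝ // IsPolicy π}, Vpi P R γ π.1 s

/-- The optimal action-value function. -/
noncomputable def Qstar [Fintype S] [Fintype A] (P : S → A → S → ℝ) (R : S → A → ℝ)
    (γ : ℝ) : S → A → ℝ :=
  fun s a => ⨆ π : {π : S → A → ℝ // IsPolicy π}, Qpi P R γ π.1 s a

/-- Supremum norm of a function on a (finite) index type. -/
noncomputable def supNorm {ι : Type*} (f : ι → ℝ) : ℝ := ⨆ i, |f i|

/-- A lower-level policy, selecting an action within each group. -/
structure IsLower [Fintype A] (g : A → G) (πi : G → A → ℝ) : Prop where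
  nonneg : ∀ h a, 0 ≤ πi h a
  sum_one : ∀ h, ∑ a, πi h a = 1
  support : ∀ h a, g a ≠ h → πi h a = 0

/-- The composed policy `π^o ∘ π^i`. -/
def compose (g : A → G) (πi : G → A → ℝ) (πo : S → G → ℝ) : S → A → ℝ :=
  fun s a => πo s (g a) * πi (g a) a

/-- Grouped transition kernel. -/
noncomputable def PG [Fintype A] (P : S → A → S → ℝ) (πi : G → A → ℝ) : S → G → S → ℝ :=
  fun s h s' => ∑ a, πi h a * P s a s'

/-- Grouped reward. -/
noncomputable def RG [Fintype A] (R : S → A → ℝ) (πi : G → A → ℝ) : S → G → ℝ :=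
  fun s h => ∑ a, πi h a * R s a

/-- The optimal transition deviation factor `β_P^*(g)`. -/
noncomputable def betaPstar [Fintype S] (P : S → A → S → ℝ) (g : A → G) : ℝ :=
  ⨆ p : S × G, (1 - ∑ s', ⨅ a : {a : A // g a = p.2}, P p.1 a.1 s')

/-- The optimal reward deviation factor `β_R^*(g)`. -/
noncomputable def betaRstar (R : S → A → ℝ) (g : A → G) : ℝ :=
  ⨆ q : {q : S × A × A // g q.2.1 = g q.2.2}, (R q.1.1 q.1.2.1 - R q.1.1 q.1.2.2)


/-- Bellman optimality operator. -/
noncomputable def bellmanOpt [Fintype S] [Fintype A] (P : S → A → S → ℝ) (R : S → A → ℝ)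
    (γ : ℝ) (Q : S → A → ℝ) : S → A → ℝ :=
  fun s a => R s a + γ * ∑ s', P s a s' * ⨆ a', Q s' a'

/-- The randomized policy corresponding to a deterministic policy. -/
noncomputable def detPolicy (f : S → A) : S → A → ℝ :=
  fun s a => if a = f s then 1 else 0


set_option linter.unusedSectionVars false

section Aux

variable {S A : Type*} [Fintype S] [Fintype A]

lemma sum_weighted_le {ι : Type*} [Fintype ι] {w f : ι → ℝ} {C : ℝ}
    (hw : ∀ i, 0 ≤ w i) (hs : ∑ i, w i = 1) (hf : ∀ i, f i ≤ C) :
    ∑ i, w i * f i ≤ C := by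
  calc ∑ i, w i * f i ≤ ∑ i, w i * C :=
        Finset.sum_le_sum (fun i _ => mul_le_mul_of_nonneg_left (hf i) (hw i))
    _ = C := by rw [← Finset.sum_mul, hs, one_mul]

lemma le_sum_weighted {ι : Type*} [Fintype ι] {w f : ι → ℝ} {C : ℝ}
    (hw : ∀ i, 0 ≤ w i) (hs : ∑ i, w i = 1) (hf : ∀ i, C ≤ f i) :
    C ≤ ∑ i, w i * f i := by
  calc C = ∑ i, w i * C := by rw [← Finset.sum_mul, hs, one_mul]
    _ ≤ ∑ i, w i * f i :=
        Finset.sum_le_sum (fun i _ => mul_le_mul_of_nonneg_left (hf i) (hw i))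

lemma abs_sum_weighted_le {ι : Type*} [Fintype ι] {w f : ι → ℝ} {C : ℝ}
    (hw : ∀ i, 0 ≤ w i) (hs : ∑ i, w i = 1) (hf : ∀ i, |f i| ≤ C) :
    |∑ i, w i * f i| ≤ C := by
  calc |∑ i, w i * f i| ≤ ∑ i, |w i * f i| := Finset.abs_sum_le_sum_abs _ _
    _ = ∑ i, w i * |f i| := by
        refine Finset.sum_congr rfl (fun i _ => ?_)
        rw [abs_mul, abs_of_nonneg (hw i)]
    _ ≤ C := sum_weighted_le hw hs hf

/-- The Bellman policy-evaluation operator. -/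
noncomputable def Tpi (P : S → A → S → ℝ) (R : S → A → ℝ) (γ : ℝ) (π : S → A → ℝ)
    (Q : S → A → ℝ) : S → A → ℝ :=
  fun s a => R s a + γ * ∑ s', P s a s' * ∑ a', π s' a' * Q s' a'

lemma tpi_lipschitz [Nonempty S] [Nonempty A] (P : S → A → S → ℝ) (R : S → A → ℝ) {γ : ℝ}
    (hP : IsKernel P) (hγ0 : 0 ≤ γ) {π : S → A → ℝ} (hπ : IsPolicy π) :
    LipschitzWith ⟨γ, hγ0⟩ (Tpi P R γ π) := by
  apply LipschitzWith.of_dist_le_mul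
  intro Q Q'
  show dist _ _ ≤ γ * dist Q Q'
  have hd0 : (0:ℝ) ≤ γ * dist Q Q' := mul_nonneg hγ0 dist_nonneg
  rw [dist_pi_le_iff hd0]
  intro s
  rw [dist_pi_le_iff hd0]
  intro a
  have key : ∀ s' a', |Q s' a' - Q' s' a'| ≤ dist Q Q' := by
    intro s' a'
    calc |Q s' a' - Q' s' a'| = dist (Q s' a') (Q' s' a') := by rw [Real.dist_eq]
      _ ≤ dist (Q s') (Q' s') := dist_le_pi_dist (Q s') (Q' s') a'
      _ ≤ dist Q Q' := dist_le_pi_dist Q Q' s'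
  have : Tpi P R γ π Q s a - Tpi P R γ π Q' s a
      = γ * ∑ s', P s a s' * ∑ a', π s' a' * (Q s' a' - Q' s' a') := by
    simp only [Tpi, mul_sub, Finset.sum_sub_distrib]
    ring
  rw [Real.dist_eq, this, abs_mul, abs_of_nonneg hγ0]
  have : |∑ s', P s a s' * ∑ a', π s' a' * (Q s' a' - Q' s' a')| ≤ dist Q Q' := by
    refine abs_sum_weighted_le (hP.nonneg s a) (hP.sum_one s a) (fun s' => ?_)
    exact abs_sum_weighted_le (hπ.nonneg s') (hπ.sum_one s') (fun a' => key s' a')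
  exact mul_le_mul_of_nonneg_left this hγ0

lemma bellman_exists [Nonempty S] [Nonempty A] (P : S → A → S → ℝ) (R : S → A → ℝ) {γ : ℝ}
    (hP : IsKernel P) (hγ0 : 0 ≤ γ) (hγ1 : γ < 1) {π : S → A → ℝ} (hπ : IsPolicy π) :
    ∃ Q : S → A → ℝ, IsBellman P R γ π Q := by
  have hc : ContractingWith ⟨γ, hγ0⟩ (Tpi P R γ π) :=
    ⟨by exact_mod_cast hγ1, tpi_lipschitz P R hP hγ0 hπ⟩
  refine ⟨hc.fixedPoint (Tpi P R γ π), ?_⟩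
  intro s a
  have := hc.fixedPoint_isFixedPt (f := Tpi P R γ π)
  conv_lhs => rw [← this]
  rfl

lemma qpi_bellman [Nonempty S] [Nonempty A] (P : S → A → S → ℝ) (R : S → A → ℝ) {γ : ℝ}
    (hP : IsKernel P) (hγ0 : 0 ≤ γ) (hγ1 : γ < 1) {π : S → A → ℝ} (hπ : IsPolicy π) :
    IsBellman P R γ π (Qpi P R γ π) := by
  have h : ∃ Q : S → A → ℝ, IsBellman P R γ π Q := bellman_exists P R hP hγ0 hγ1 hπ
  rw [Qpi, dif_pos h]
  exact h.choose_spec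

lemma bellman_bounds [Nonempty S] [Nonempty A] {P : S → A → S → ℝ} {R : S → A → ℝ} {γ : ℝ}
    (hP : IsKernel P) (hR : ∀ s a, 0 ≤ R s a ∧ R s a ≤ 1)
    (hγ0 : 0 ≤ γ) (hγ1 : γ < 1) {π : S → A → ℝ} (hπ : IsPolicy π)
    {Qb : S → A → ℝ} (hB : IsBellman P R γ π Qb) :
    ∀ s a, 0 ≤ Qb s a ∧ Qb s a ≤ 1 / (1 - γ) := by
  have hne : (Finset.univ : Finset (S × A)).Nonempty := Finset.univ_nonempty
  set M : ℝ := Finset.univ.sup' hne (fun p : S × A => Qb p.1 p.2) with hM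
  set m : ℝ := Finset.univ.inf' hne (fun p : S × A => Qb p.1 p.2) with hm
  have hleM : ∀ s a, Qb s a ≤ M := fun s a =>
    Finset.le_sup' (fun p : S × A => Qb p.1 p.2) (Finset.mem_univ (s, a))
  have hmle : ∀ s a, m ≤ Qb s a := fun s a =>
    Finset.inf'_le (fun p : S × A => Qb p.1 p.2) (Finset.mem_univ (s, a))
  have hMle : M ≤ 1 / (1 - γ) := by
    obtain ⟨p, -, hp⟩ := Finset.exists_mem_eq_sup' hne (fun p : S × A => Qb p.1 p.2)
    have hsum : ∑ s', P p.1 p.2 s' * ∑ a', π s' a' * Qb s' a' ≤ M := by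
      refine sum_weighted_le (hP.nonneg p.1 p.2) (hP.sum_one p.1 p.2) (fun s' => ?_)
      exact sum_weighted_le (hπ.nonneg s') (hπ.sum_one s') (fun a' => hleM s' a')
    have hq : M = R p.1 p.2 + γ * ∑ s', P p.1 p.2 s' * ∑ a', π s' a' * Qb s' a' := by
      rw [hM, hp, hB p.1 p.2]
    rw [le_div_iff₀ (by linarith)]
    nlinarith [mul_le_mul_of_nonneg_left hsum hγ0, (hR p.1 p.2).2]
  have hmge : 0 ≤ m := by
    obtain ⟨p, -, hp⟩ := Finset.exists_mem_eq_inf' hne (fun p : S × A => Qb p.1 p.2)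
    have hsum : m ≤ ∑ s', P p.1 p.2 s' * ∑ a', π s' a' * Qb s' a' := by
      refine le_sum_weighted (hP.nonneg p.1 p.2) (hP.sum_one p.1 p.2) (fun s' => ?_)
      exact le_sum_weighted (hπ.nonneg s') (hπ.sum_one s') (fun a' => hmle s' a')
    have hq : m = R p.1 p.2 + γ * ∑ s', P p.1 p.2 s' * ∑ a', π s' a' * Qb s' a' := by
      rw [hm, hp, hB p.1 p.2]
    nlinarith [mul_le_mul_of_nonneg_left hsum hγ0, (hR p.1 p.2).1]
  exact fun s a => ⟨le_trans hmge (hmle s a), le_trans (hleM s a) hMle⟩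

end Aux

section Main

variable {S A : Type*} [Fintype S] [Fintype A] [Nonempty S] [Nonempty A]

lemma abs_le_supNorm {ι : Type*} [Fintype ι] [Nonempty ι] (f : ι → ℝ) (i : ι) :
    |f i| ≤ supNorm f := by
  unfold supNorm
  exact le_ciSup (Set.Finite.bddAbove (Set.finite_range (fun j => |f j|))) i

lemma le_supNorm {ι : Type*} [Fintype ι] [Nonempty ι] (f : ι → ℝ) (i : ι) :
    f i ≤ supNorm f :=
  (le_abs_self _).trans (abs_le_supNorm f i)

lemma supNorm_le {ι : Type*} [Fintype ι] [Nonempty ι] {f : ι → ℝ} {C : ℝ}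
    (h : ∀ i, |f i| ≤ C) : supNorm f ≤ C :=
  ciSup_le h

lemma unif_policy : IsPolicy (fun (_ : S) (_ : A) => (Fintype.card A : ℝ)⁻¹) := by
  constructor
  · intro s a; positivity
  · intro s
    rw [Finset.sum_const, Finset.card_univ, nsmul_eq_mul]
    rw [mul_inv_cancel₀]
    exact_mod_cast Fintype.card_ne_zero

lemma policy_nonempty : Nonempty {π : S → A → ℝ // IsPolicy π} :=
  ⟨⟨_, unif_policy⟩⟩

lemma det_policy (f : S → A) : IsPolicy (detPolicy (A := A) f) := by
  constructor
  · intro s a; unfold detPolicy; split <;> norm_num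
  · intro s; simp [detPolicy]

variable {P : S → A → S → ℝ} {R : S → A → ℝ} {γ : ℝ}
  (hP : IsKernel P) (hR : ∀ s a, 0 ≤ R s a ∧ R s a ≤ 1) (hγ0 : 0 ≤ γ) (hγ1 : γ < 1)

include hP hR hγ0 hγ1

lemma qpi_bounds {π : S → A → ℝ} (hπ : IsPolicy π) (s : S) (a : A) :
    0 ≤ Qpi P R γ π s a ∧ Qpi P R γ π s a ≤ 1 / (1 - γ) :=
  bellman_bounds hP hR hγ0 hγ1 hπ (qpi_bellman P R hP hγ0 hγ1 hπ) s a

lemma vpi_bounds {π : S → A → ℝ} (hπ : IsPolicy π) (s : S) :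
    0 ≤ Vpi P R γ π s ∧ Vpi P R γ π s ≤ 1 / (1 - γ) := by
  constructor
  · exact le_sum_weighted (hπ.nonneg s) (hπ.sum_one s)
      (fun a => (qpi_bounds hP hR hγ0 hγ1 hπ s a).1)
  · exact sum_weighted_le (hπ.nonneg s) (hπ.sum_one s)
      (fun a => (qpi_bounds hP hR hγ0 hγ1 hπ s a).2)

lemma bddQ (s : S) (a : A) :
    BddAbove (Set.range fun π : {π : S → A → ℝ // IsPolicy π} => Qpi P R γ π.1 s a) := by
  refine ⟨1 / (1 - γ), ?_⟩
  rintro _ ⟨π, rfl⟩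
  exact (qpi_bounds hP hR hγ0 hγ1 π.2 s a).2

lemma bddV (s : S) :
    BddAbove (Set.range fun π : {π : S → A → ℝ // IsPolicy π} => Vpi P R γ π.1 s) := by
  refine ⟨1 / (1 - γ), ?_⟩
  rintro _ ⟨π, rfl⟩
  exact (vpi_bounds hP hR hγ0 hγ1 π.2 s).2

lemma qpi_le_qstar {π : S → A → ℝ} (hπ : IsPolicy π) (s : S) (a : A) :
    Qpi P R γ π s a ≤ Qstar P R γ s a :=
  le_ciSup (bddQ hP hR hγ0 hγ1 s a) (⟨π, hπ⟩ : {π : S → A → ℝ // IsPolicy π})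

lemma vpi_le_vstar {π : S → A → ℝ} (hπ : IsPolicy π) (s : S) :
    Vpi P R γ π s ≤ Vstar P R γ s :=
  le_ciSup (bddV hP hR hγ0 hγ1 s) (⟨π, hπ⟩ : {π : S → A → ℝ // IsPolicy π})

lemma qpi_v {π : S → A → ℝ} (hπ : IsPolicy π) (s : S) (a : A) :
    Qpi P R γ π s a = R s a + γ * ∑ s', P s a s' * Vpi P R γ π s' :=
  qpi_bellman P R hP hγ0 hγ1 hπ s a

lemma qstar_le (s : S) (a : A) :
    Qstar P R γ s a ≤ R s a + γ * ∑ s', P s a s' * Vstar P R γ s' := by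
  haveI := policy_nonempty (S := S) (A := A)
  refine ciSup_le (fun π => ?_)
  rw [qpi_v hP hR hγ0 hγ1 π.2 s a]
  have : ∑ s', P s a s' * Vpi P R γ π.1 s' ≤ ∑ s', P s a s' * Vstar P R γ s' :=
    Finset.sum_le_sum (fun s' _ =>
      mul_le_mul_of_nonneg_left (vpi_le_vstar hP hR hγ0 hγ1 π.2 s') (hP.nonneg s a s'))
  nlinarith [mul_le_mul_of_nonneg_left this hγ0]

lemma vstar_le_qstar {s : S} {a₀ : A} (hmax : ∀ a, Qstar P R γ s a ≤ Qstar P R γ s a₀) :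
    Vstar P R γ s ≤ Qstar P R γ s a₀ := by
  haveI := policy_nonempty (S := S) (A := A)
  refine ciSup_le (fun π => ?_)
  exact sum_weighted_le (π.2.nonneg s) (π.2.sum_one s)
    (fun a => (qpi_le_qstar hP hR hγ0 hγ1 π.2 s a).trans (hmax a))

omit hP hR hγ0 hγ1 in
lemma vpi_det (f : S → A) (s : S) :
    Vpi P R γ (detPolicy f) s = Qpi P R γ (detPolicy f) s (f s) := by
  simp [Vpi, detPolicy, ite_mul, one_mul, zero_mul]

end Main


theorem statement_6 {S A : Type*} [Fintype S] [Fintype A] [Nonempty S] [Nonempty A]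
    (P : S → A → S → ℝ) (R : S → A → ℝ) (γ : ℝ)
    (hP : IsKernel P) (hR : ∀ s a, 0 ≤ R s a ∧ R s a ≤ 1)
    (hγ0 : 0 ≤ γ) (hγ1 : γ < 1)
    (Q : S → A → ℝ) (πQ : S → A)
    (hgreedy : ∀ s a, Q s a ≤ Q s (πQ s)) :
    supNorm (fun s => Vstar P R γ s - Vpi P R γ (detPolicy πQ) s)
      ≤ 2 * supNorm (fun p : S × A => Qstar P R γ p.1 p.2 - Q p.1 p.2) / (1 - γ) := by
  set ε := supNorm (fun p : S × A => Qstar P R γ p.1 p.2 - Q p.1 p.2) with hε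
  set D := supNorm (fun s => Vstar P R γ s - Vpi P R γ (detPolicy πQ) s) with hD
  have hπd : IsPolicy (detPolicy (A := A) πQ) := det_policy πQ
  have hεab : ∀ s a, |Qstar P R γ s a - Q s a| ≤ ε := fun s a =>
    abs_le_supNorm (fun p : S × A => Qstar P R γ p.1 p.2 - Q p.1 p.2) (s, a)
  have hε0 : 0 ≤ ε := (abs_nonneg _).trans (hεab Classical.ofNonempty Classical.ofNonempty)
  have key : ∀ s, Vstar P R γ s - Vpi P R γ (detPolicy πQ) s ≤ 2 * ε + γ * D := by
    intro s
    obtain ⟨a₀, -, hmax⟩ := Finset.exists_max_image (Finset.univ : Finset A)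
      (fun a => Qstar P R γ s a) Finset.univ_nonempty
    have h1 : Vstar P R γ s ≤ Qstar P R γ s a₀ :=
      vstar_le_qstar hP hR hγ0 hγ1 (fun a => hmax a (Finset.mem_univ a))
    have h2 : Qstar P R γ s a₀ ≤ Qstar P R γ s (πQ s) + 2 * ε := by
      have e1 := abs_le.mp (hεab s a₀)
      have e2 := abs_le.mp (hεab s (πQ s))
      have e3 := hgreedy s a₀
      linarith [e1.2, e2.1]
    have h3 : Qstar P R γ s (πQ s) ≤ R s (πQ s) + γ * ∑ s', P s (πQ s) s' * Vstar P R γ s' :=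
      qstar_le hP hR hγ0 hγ1 s (πQ s)
    have h4 : Vpi P R γ (detPolicy πQ) s
        = R s (πQ s) + γ * ∑ s', P s (πQ s) s' * Vpi P R γ (detPolicy πQ) s' := by
      rw [vpi_det (P := P) (R := R) (γ := γ) πQ s, qpi_v hP hR hγ0 hγ1 hπd]
    have h5 : ∑ s', P s (πQ s) s' * Vstar P R γ s'
        - ∑ s', P s (πQ s) s' * Vpi P R γ (detPolicy πQ) s' ≤ D := by
      rw [← Finset.sum_sub_distrib]
      have : ∑ s', (P s (πQ s) s' * Vstar P R γ s' - P s (πQ s) s' * Vpi P R γ (detPolicy πQ) s')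
          = ∑ s', P s (πQ s) s' * (Vstar P R γ s' - Vpi P R γ (detPolicy πQ) s') := by
        refine Finset.sum_congr rfl (fun s' _ => ?_); ring
      rw [this]
      exact sum_weighted_le (hP.nonneg s (πQ s)) (hP.sum_one s (πQ s))
        (fun s' => le_supNorm (fun s => Vstar P R γ s - Vpi P R γ (detPolicy πQ) s) s')
    nlinarith [mul_le_mul_of_nonneg_left h5 hγ0]
  have hDle : D ≤ 2 * ε + γ * D := by
    refine supNorm_le (fun s => ?_)
    rw [abs_of_nonneg (by linarith [vpi_le_vstar hP hR hγ0 hγ1 hπd s])]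
    exact key s
  rw [le_div_iff₀ (by linarith)]
  nlinarith [vpi_le_vstar hP hR hγ0 hγ1 hπd Classical.ofNonempty]


end MDPGroup
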